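/- Let ν : S×A → ℝ and ε ≥ 0 satisfy |ν(s,a) − Q^π(s,a)| ≤ ε for all (s,a) ∈ S×A. Then the function ν̄ defined by ν̄(s,a) = ν(s,a) + ((1+γ)/(1−γ))·ε satisfies ν̄(s,a) ≥ (B_π ν̄)(s,a) for all (s,a) ∈ S×A. -/

import Mathlib

open Finset

noncomputable section

/-- The Bellman operator `B_π` for policy `pol`. -/
def bellman {S A : Type*} [Fintype S] [Fintype A]
    (γ : ℝ) (r : S → A → ℝ) (T : S → A → S → ℝ) (pol : S → A → ℝ)
    (Q : S → A → ℝ) : S → A → ℝ :=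
  fun s a => r s a + γ * ∑ s', T s a s' * ∑ a', pol s' a' * Q s' a'

/-- if `|ν − Q^π| ≤ ε` pointwise, then `ν̄ = ν + (1+γ)/(1−γ)·ε`
satisfies `ν̄ ≥ B_π ν̄` pointwise. -/
theorem stmt_3 {S A : Type*} [Fintype S] [Fintype A] [Nonempty S] [Nonempty A]
    (γ Rmax : ℝ) (hγ0 : 0 < γ) (hγ1 : γ < 1) (hR : 0 < Rmax)
    (r : S → A → ℝ) (hr : ∀ s a, r s a ∈ Set.Icc (0 : ℝ) Rmax)
    (T : S → A → S → ℝ) (hT0 : ∀ s a s', 0 ≤ T s a s') (hT1 : ∀ s a, ∑ s', T s a s' = 1)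
    (pol : S → A → ℝ) (hpol0 : ∀ s a, 0 ≤ pol s a) (hpol1 : ∀ s, ∑ a, pol s a = 1)
    (Qpi : S → A → ℝ) (hQpi : ∀ s a, Qpi s a = bellman γ r T pol Qpi s a)
    (ν : S → A → ℝ) (ε : ℝ) (hε : 0 ≤ ε)
    (hν : ∀ s a, |ν s a - Qpi s a| ≤ ε) :
    ∀ s a,
      bellman γ r T pol (fun s' a' => ν s' a' + ((1 + γ) / (1 - γ)) * ε) s a ≤
        ν s a + ((1 + γ) / (1 - γ)) * ε := by
  intro s a
  set c : ℝ := (1 + γ) / (1 - γ) with hc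
  have hγ1' : 0 < 1 - γ := by linarith
  -- inner sums
  have hinner : ∀ s', ∑ a', pol s' a' * (ν s' a' + c * ε)
      = (∑ a', pol s' a' * ν s' a') + c * ε := by
    intro s'
    simp only [mul_add, Finset.sum_add_distrib, ← Finset.sum_mul, hpol1]
    ring
  have hinner_le : ∀ s', (∑ a', pol s' a' * ν s' a')
      ≤ (∑ a', pol s' a' * Qpi s' a') + ε := by
    intro s'
    have : ∑ a', pol s' a' * ν s' a' ≤ ∑ a', pol s' a' * (Qpi s' a' + ε) := by
      apply Finset.sum_le_sum
      intro a' _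
      have := abs_le.mp (hν s' a')
      nlinarith [hpol0 s' a']
    calc ∑ a', pol s' a' * ν s' a' ≤ ∑ a', pol s' a' * (Qpi s' a' + ε) := this
      _ = (∑ a', pol s' a' * Qpi s' a') + ε := by
          simp only [mul_add, Finset.sum_add_distrib, ← Finset.sum_mul, hpol1]
          ring
  have houter : ∑ s', T s a s' * ∑ a', pol s' a' * (ν s' a' + c * ε)
      ≤ (∑ s', T s a s' * ∑ a', pol s' a' * Qpi s' a') + ε + c * ε := by
    have h1 : ∑ s', T s a s' * ∑ a', pol s' a' * (ν s' a' + c * ε)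
        ≤ ∑ s', T s a s' * ((∑ a', pol s' a' * Qpi s' a') + ε + c * ε) := by
      apply Finset.sum_le_sum
      intro s' _
      rw [hinner s']
      have := hinner_le s'
      nlinarith [hT0 s a s']
    calc _ ≤ _ := h1
      _ = (∑ s', T s a s' * ∑ a', pol s' a' * Qpi s' a') + ε + c * ε := by
          simp only [mul_add, Finset.sum_add_distrib, ← Finset.sum_mul, hT1]
          ring
  have hbell : bellman γ r T pol (fun s' a' => ν s' a' + c * ε) s a
      ≤ Qpi s a + γ * (ε + c * ε) := by
    rw [hQpi s a]
    simp only [bellman]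
    nlinarith [houter]
  have hkey : γ * (ε + c * ε) + ε = c * ε := by
    rw [hc]
    field_simp
    ring
  have hνq : Qpi s a ≤ ν s a + ε := by
    have := abs_le.mp (hν s a); linarith
  linarith
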